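/- Convexity of the binary two-temperature loss for t₁ ≥ t₂ and t₁ ≥ 1 (Theorem 1, part 1): let 1 ≤ t₂ ≤ t₁ < 2, and for each a ∈ ℝ let G(a) be the unique real satisfying exp_{t₂}(a/2 - G(a)) + exp_{t₂}(-a/2 - G(a)) = 1 (both summands are positive since t₂ ≥ 1). Then the surrogate loss ξ(a) = -log_{t₁} exp_{t₂}(a/2 - G(a)) is a convex function of a on ℝ. In the special case t₁ = t₂ = t, the loss equals ξ(a) = G(a) - a/2 and in particular a ↦ G(a) - a/2 is convex. -/

import Mathlib

/-- The tempered logarithm `log_t`: for `t ≠ 1` it is `(x^(1-t) - 1)/(1-t)`;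
for `t = 1` it is the natural logarithm. -/
noncomputable def tlog (t x : ℝ) : ℝ :=
  if t = 1 then Real.log x else (x ^ (1 - t) - 1) / (1 - t)

/-- The tempered exponential `exp_t`: for `t ≠ 1` it is
`(max 0 (1 + (1-t)u))^(1/(1-t))`; for `t = 1` it is the standard exponential. -/
noncomputable def texp (t u : ℝ) : ℝ :=
  if t = 1 then Real.exp u else (max 0 (1 + (1 - t) * u)) ^ (1 / (1 - t))

/-- auxiliary: unified loss function `φ_r(p)` -/
noncomputable def phiF (r p : ℝ) : ℝ := if r = 0 then -Real.log p else (1 - p ^ r) / r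

/-- auxiliary: unified link function `h_s(p)` -/
noncomputable def hhF (s p : ℝ) : ℝ :=
  if s = 0 then Real.log p - Real.log (1 - p) else (p ^ s - (1 - p) ^ s) / s

lemma phiF_hasDerivAt {r p : ℝ} (hp : 0 < p) :
    HasDerivAt (phiF r) (-(p ^ (r - 1))) p := by
  rcases eq_or_ne r 0 with h | h
  · subst h
    have := (Real.hasDerivAt_log hp.ne').neg
    have hEq : -p⁻¹ = -(p ^ ((0 : ℝ) - 1)) := by
      rw [zero_sub, Real.rpow_neg_one]
    rw [hEq] at this
    refine this.congr_of_eventuallyEq ?_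
    filter_upwards with x
    simp [phiF]
  · have hd : HasDerivAt (fun x : ℝ => x ^ r) (r * p ^ (r - 1)) p :=
      Real.hasDerivAt_rpow_const (Or.inl hp.ne')
    have := ((hasDerivAt_const p (1 : ℝ)).sub hd).div_const r
    have hEq : (0 - r * p ^ (r - 1)) / r = -(p ^ (r - 1)) := by
      field_simp
      ring
    rw [hEq] at this
    refine this.congr_of_eventuallyEq ?_
    filter_upwards with x
    simp [phiF, h]

lemma hhF_hasDerivAt {s p : ℝ} (hp : 0 < p) (hp1 : p < 1) :
    HasDerivAt (hhF s) (p ^ (s - 1) + (1 - p) ^ (s - 1)) p := by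
  have h1p : (0 : ℝ) < 1 - p := by linarith
  have hone : HasDerivAt (fun x : ℝ => 1 - x) (-1) p := by
    exact ((hasDerivAt_const p (1 : ℝ)).sub (hasDerivAt_id' p)).congr_deriv (by norm_num)
  rcases eq_or_ne s 0 with h | h
  · subst h
    have hd2 : HasDerivAt (fun x : ℝ => Real.log (1 - x)) ((1 - p)⁻¹ * -1) p :=
      (Real.hasDerivAt_log h1p.ne').comp p hone
    have := (Real.hasDerivAt_log hp.ne').sub hd2
    have hEq : p⁻¹ - (1 - p)⁻¹ * -1 = p ^ ((0:ℝ) - 1) + (1 - p) ^ ((0:ℝ) - 1) := by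
      rw [zero_sub, Real.rpow_neg_one, Real.rpow_neg_one]; ring
    rw [hEq] at this
    refine this.congr_of_eventuallyEq ?_
    filter_upwards with x
    simp [hhF]
  · have hd1 : HasDerivAt (fun x : ℝ => x ^ s) (s * p ^ (s - 1)) p :=
      Real.hasDerivAt_rpow_const (Or.inl hp.ne')
    have hd2 : HasDerivAt (fun x : ℝ => (1 - x) ^ s) (s * (1 - p) ^ (s - 1) * -1) p :=
      (Real.hasDerivAt_rpow_const (Or.inl h1p.ne')).comp p hone
    have := (hd1.sub hd2).div_const s
    have hEq : (s * p ^ (s - 1) - s * (1 - p) ^ (s - 1) * -1) / s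
        = p ^ (s - 1) + (1 - p) ^ (s - 1) := by
      field_simp; ring
    rw [hEq] at this
    refine this.congr_of_eventuallyEq ?_
    filter_upwards with x
    simp [hhF, h]

theorem binary_loss_convex (t₁ t₂ : ℝ) (ht₂1 : 1 ≤ t₂) (ht₂₁ : t₂ ≤ t₁)
    (ht₁2 : t₁ < 2) (G : ℝ → ℝ)
    (hG : ∀ a : ℝ, texp t₂ (a / 2 - G a) + texp t₂ (-a / 2 - G a) = 1)
    (hGpos : ∀ a : ℝ,
      0 < texp t₂ (a / 2 - G a) ∧ 0 < texp t₂ (-a / 2 - G a)) :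
    ConvexOn ℝ Set.univ (fun a : ℝ => -tlog t₁ (texp t₂ (a / 2 - G a))) ∧
    (t₁ = t₂ →
      (∀ a : ℝ, -tlog t₁ (texp t₂ (a / 2 - G a)) = G a - a / 2) ∧
      ConvexOn ℝ Set.univ (fun a : ℝ => G a - a / 2)) := by
  have ht₁1 : 1 ≤ t₁ := le_trans ht₂1 ht₂₁
  have ht₂2 : t₂ < 2 := lt_of_le_of_lt ht₂₁ ht₁2
  set r : ℝ := 1 - t₁ with hrdef
  set s : ℝ := 1 - t₂ with hsdef
  have hr0 : r ≤ 0 := by simp [hrdef]; linarith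
  have hs0 : s ≤ 0 := by simp [hsdef]; linarith
  have hrs : r ≤ s := by simp [hrdef, hsdef]; linarith
  have hr1 : -1 < r := by simp [hrdef]; linarith
  set p : ℝ → ℝ := fun a => texp t₂ (a / 2 - G a) with hpdef
  have hp0 : ∀ a, 0 < p a := fun a => (hGpos a).1
  have hq0 : ∀ a, 0 < 1 - p a := by
    intro a
    have := hG a
    have := (hGpos a).2
    simp only [hpdef]; linarith
  have hp1 : ∀ a, p a < 1 := fun a => by have := hq0 a; linarith
  -- the texp values satisfy the link equation
  have hkey : ∀ a, hhF s (p a) = a := by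
    intro a
    have hq : (1 : ℝ) - p a = texp t₂ (-a / 2 - G a) := by
      have := hG a; simp only [hpdef]; linarith
    rcases eq_or_ne t₂ 1 with h | h
    · have hs : s = 0 := by simp [hsdef, h]
      have hpe : p a = Real.exp (a / 2 - G a) := by simp [hpdef, texp, h]
      have hqe : (1 : ℝ) - p a = Real.exp (-a / 2 - G a) := by
        rw [hq]; simp [texp, h]
      rw [hhF, if_pos hs, hqe, hpe, Real.log_exp, Real.log_exp]
      ring
    · have hs : s ≠ 0 := by simp [hsdef, sub_ne_zero]; exact fun hh => h hh.symm
      have hmax : ∀ u : ℝ, 0 < texp t₂ u → (texp t₂ u) ^ s = 1 + s * u := by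
        intro u hu
        have htu : texp t₂ u = (max 0 (1 + s * u)) ^ (1 / s) := by
          simp [texp, if_neg h, hsdef]
        by_cases hx : 0 < 1 + s * u
        · rw [htu, max_eq_right hx.le, ← Real.rpow_mul hx.le, one_div,
            inv_mul_cancel₀ hs, Real.rpow_one]
        · exfalso
          rw [htu, max_eq_left (by linarith), Real.zero_rpow (by simpa using hs)] at hu
          exact lt_irrefl 0 hu
      have h1 : (p a) ^ s = 1 + s * (a / 2 - G a) := hmax _ (hGpos a).1
      have h2 : ((1 : ℝ) - p a) ^ s = 1 + s * (-a / 2 - G a) := by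
        rw [hq]; exact hmax _ (hGpos a).2
      simp only [hhF, if_neg hs, h1, h2]
      field_simp
      ring
  -- the loss equals phiF r ∘ p
  have hphi : ∀ a, -tlog t₁ (p a) = phiF r (p a) := by
    intro a
    rcases eq_or_ne t₁ 1 with h | h
    · have : r = 0 := by simp [hrdef, h]
      simp [tlog, phiF, h, this]
    · have hr : r ≠ 0 := by simp [hrdef, sub_ne_zero]; exact fun hh => h hh.symm
      simp only [tlog, phiF, if_neg h, if_neg hr, hrdef]
      field_simp
      have hr' : (1 - t₁) ≠ 0 := by rw [← hrdef]; exact hr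
      rw [if_neg hr', mul_div_assoc', mul_div_cancel_left₀ _ hr']
      ring
  -- strict monotonicity of hhF s on Ioo 0 1
  have hhmono : StrictMonoOn (hhF s) (Set.Ioo 0 1) := by
    apply strictMonoOn_of_deriv_pos (convex_Ioo 0 1)
    · intro x hx
      exact ((hhF_hasDerivAt hx.1 hx.2).continuousAt).continuousWithinAt
    · intro x hx
      rw [interior_Ioo] at hx
      rw [(hhF_hasDerivAt hx.1 hx.2).deriv]
      have := Real.rpow_pos_of_pos hx.1 (s - 1)
      have := Real.rpow_pos_of_pos (by linarith [hx.2] : (0:ℝ) < 1 - x) (s - 1)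
      linarith
  -- p is monotone
  have hpmono : Monotone p := by
    intro a b hab
    by_contra hlt
    push_neg at hlt
    have := hhmono ⟨hp0 b, hp1 b⟩ ⟨hp0 a, hp1 a⟩ hlt
    rw [hkey a, hkey b] at this
    exact absurd hab (not_le.mpr this)
  -- range of p contains Ioo 0 1
  have hrange : Set.Ioo (0:ℝ) 1 ⊆ Set.range p := by
    intro x hx
    refine ⟨hhF s x, ?_⟩
    have h1 : hhF s (p (hhF s x)) = hhF s x := hkey _
    exact hhmono.injOn ⟨hp0 _, hp1 _⟩ hx h1
  -- p is continuous
  have hpcont : Continuous p := by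
    rw [continuous_iff_continuousAt]
    intro a
    refine continuousAt_of_monotoneOn_of_image_mem_nhds
      (fun x _ y _ hxy => hpmono hxy) Filter.univ_mem ?_
    rw [Set.image_univ]
    exact Filter.mem_of_superset ((isOpen_Ioo).mem_nhds ⟨hp0 a, hp1 a⟩) hrange
  -- derivative of p via inverse function
  have hpderiv : ∀ a, HasDerivAt p ((p a ^ (s - 1) + (1 - p a) ^ (s - 1))⁻¹) a := by
    intro a
    have hdpos : 0 < p a ^ (s - 1) + (1 - p a) ^ (s - 1) := by
      have := Real.rpow_pos_of_pos (hp0 a) (s - 1)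
      have := Real.rpow_pos_of_pos (hq0 a) (s - 1)
      linarith
    exact HasDerivAt.of_local_left_inverse (hpcont.continuousAt)
      (hhF_hasDerivAt (hp0 a) (hp1 a)) hdpos.ne'
      (Filter.Eventually.of_forall hkey)
  -- derivative of the loss
  set ξ : ℝ → ℝ := fun a => -tlog t₁ (texp t₂ (a / 2 - G a)) with hxidef
  have hxi_eq : ξ = phiF r ∘ p := by
    funext a
    exact hphi a
  set D : ℝ → ℝ :=
    fun a => -(p a ^ (r - 1)) * (p a ^ (s - 1) + (1 - p a) ^ (s - 1))⁻¹ with hDdef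
  have hxideriv : ∀ a, HasDerivAt ξ (D a) a := by
    intro a
    rw [hxi_eq]
    exact (phiF_hasDerivAt (hp0 a)).comp a (hpderiv a)
  -- rewrite D as -(F x)⁻¹ with F monotone
  have hDalt : ∀ x : ℝ, 0 < x → x < 1 →
      -(x ^ (r - 1)) * (x ^ (s - 1) + (1 - x) ^ (s - 1))⁻¹
        = -(x ^ (s - r) + x ^ (1 - r) * (1 - x) ^ (s - 1))⁻¹ := by
    intro x hx hx1
    have hxr : x ^ (r - 1) = (x ^ (1 - r))⁻¹ := by
      rw [← Real.rpow_neg hx.le]; ring_nf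
    rw [hxr, neg_mul, ← mul_inv, neg_inj, mul_add, ← Real.rpow_add hx]
    ring_nf
  have hFpos : ∀ x : ℝ, 0 < x → x < 1 →
      0 < x ^ (s - r) + x ^ (1 - r) * (1 - x) ^ (s - 1) := by
    intro x hx hx1
    have h1 := Real.rpow_pos_of_pos hx (s - r)
    have h2 := Real.rpow_pos_of_pos hx (1 - r)
    have h3 := Real.rpow_pos_of_pos (by linarith : (0:ℝ) < 1 - x) (s - 1)
    nlinarith
  -- D is monotone
  have hDmono : Monotone D := by
    intro a b hab
    have hpa := hp0 a; have hpa1 := hp1 a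
    have hpb := hp0 b; have hpb1 := hp1 b
    have hpab : p a ≤ p b := hpmono hab
    simp only [hDdef]
    rw [hDalt _ hpa hpa1, hDalt _ hpb hpb1]
    have hF : p a ^ (s - r) + p a ^ (1 - r) * (1 - p a) ^ (s - 1)
        ≤ p b ^ (s - r) + p b ^ (1 - r) * (1 - p b) ^ (s - 1) := by
      have h1 : p a ^ (s - r) ≤ p b ^ (s - r) :=
        Real.rpow_le_rpow hpa.le hpab (by linarith)
      have h2 : p a ^ (1 - r) ≤ p b ^ (1 - r) :=
        Real.rpow_le_rpow hpa.le hpab (by linarith)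
      have h3 : (1 - p a) ^ (s - 1) ≤ (1 - p b) ^ (s - 1) :=
        Real.rpow_le_rpow_of_nonpos (by linarith : (0:ℝ) < 1 - p b)
          (by linarith) (by linarith)
      have h4 : (0:ℝ) ≤ (1 - p a) ^ (s - 1) :=
        (Real.rpow_pos_of_pos (by linarith) _).le
      have h5 : (0:ℝ) ≤ p b ^ (1 - r) := (Real.rpow_pos_of_pos hpb _).le
      nlinarith [Real.rpow_pos_of_pos hpa (1 - r)]
    have hFa := hFpos _ hpa hpa1
    have hFb := hFpos _ hpb hpb1
    exact neg_le_neg (by gcongr)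
  -- convexity
  have hconv : ConvexOn ℝ Set.univ ξ := by
    have hdiff : Differentiable ℝ ξ := fun a => (hxideriv a).differentiableAt
    have hderiv_eq : deriv ξ = D := funext fun a => (hxideriv a).deriv
    exact Monotone.convexOn_univ_of_deriv hdiff (hderiv_eq ▸ hDmono)
  refine ⟨hconv, fun ht => ?_⟩
  -- equal temperatures case
  have heq : ∀ a : ℝ, -tlog t₁ (texp t₂ (a / 2 - G a)) = G a - a / 2 := by
    intro a
    rw [ht]
    rcases eq_or_ne t₂ 1 with h | h
    · simp only [tlog, texp, if_pos h, Real.log_exp]; ring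
    · have hs : s ≠ 0 := by simp [hsdef, sub_ne_zero]; exact fun hh => h hh.symm
      have hmax : (texp t₂ (a/2 - G a)) ^ s = 1 + s * (a/2 - G a) := by
        have hu := (hGpos a).1
        have htu : texp t₂ (a/2 - G a) = (max 0 (1 + s * (a/2 - G a))) ^ (1 / s) := by
          simp [texp, if_neg h, hsdef]
        by_cases hx : 0 < 1 + s * (a/2 - G a)
        · rw [htu, max_eq_right hx.le, ← Real.rpow_mul hx.le, one_div,
            inv_mul_cancel₀ hs, Real.rpow_one]
        · exfalso
          rw [htu, max_eq_left (by linarith), Real.zero_rpow (by simpa using hs)] at hu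
          exact lt_irrefl 0 hu
      simp only [tlog, if_neg h]
      rw [show (1 : ℝ) - t₂ = s from rfl, hmax]
      field_simp
      ring
  refine ⟨heq, ?_⟩
  have : (fun a : ℝ => G a - a / 2) = ξ := by
    funext a
    rw [← heq a]
  rw [this]
  exact hconv
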